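/- Let f(t), f̃(t) ∈ Z_p[[t]] be power series converging on Z_p with f ≡ f̃ mod p^N Z_p[[t]] (all corresponding coefficients congruent mod p^N). Let a ∈ Z_p and d̃ = v_p(f̃'(a)). If 2d̃ < N and 2d̃ < v_p(f̃(a)), then f and f̃ each have a unique root α resp. α̃ in a + p^{d̃+1} Z_p, and these roots satisfy v_p(α - α̃) ≥ N - d̃. -/

import Mathlib

open Filter

namespace Stmt7Aux

variable {p : ℕ} [Fact p.Prime]

noncomputable def fval (c : ℕ → ℤ_[p]) (y : ℤ_[p]) : ℤ_[p] := ∑' k, c k * y ^ k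

noncomputable def dcoef (c : ℕ → ℤ_[p]) (k : ℕ) : ℤ_[p] := ((k : ℤ_[p]) + 1) * c (k + 1)

lemma norm_add_of_lt {u v : ℤ_[p]} (h : ‖v‖ < ‖u‖) : ‖u + v‖ = ‖u‖ := by
  rw [PadicInt.norm_add_eq_max_of_ne h.ne', max_eq_left h.le]

lemma norm_sub_le_max (u v : ℤ_[p]) : ‖u - v‖ ≤ max ‖u‖ ‖v‖ := by
  rw [sub_eq_add_neg]
  exact (IsUltrametricDist.norm_add_le_max u (-v)).trans (by rw [norm_neg])

lemma summable_aux {c : ℕ → ℤ_[p]} (hc : Tendsto (fun k => ‖c k‖) atTop (nhds 0))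
    {d : ℕ → ℤ_[p]} (hd : ∀ k, ‖d k‖ ≤ ‖c k‖) : Summable d := by
  apply NonarchimedeanAddGroup.summable_of_tendsto_cofinite_zero
  rw [Nat.cofinite_eq_atTop, tendsto_zero_iff_norm_tendsto_zero]
  exact squeeze_zero (fun k => norm_nonneg _) hd hc

lemma norm_term_le (u y : ℤ_[p]) (k : ℕ) : ‖u * y ^ k‖ ≤ ‖u‖ := by
  rw [norm_mul]
  exact mul_le_of_le_one_right (norm_nonneg _) (PadicInt.norm_le_one _)

lemma summable_fval {c : ℕ → ℤ_[p]} (hc : Tendsto (fun k => ‖c k‖) atTop (nhds 0))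
    (y : ℤ_[p]) : Summable (fun k => c k * y ^ k) :=
  summable_aux hc (fun k => norm_term_le _ _ _)

lemma dcoef_tend {c : ℕ → ℤ_[p]} (hc : Tendsto (fun k => ‖c k‖) atTop (nhds 0)) :
    Tendsto (fun k => ‖dcoef c k‖) atTop (nhds 0) := by
  have h1 : Tendsto (fun k => ‖c (k + 1)‖) atTop (nhds 0) :=
    hc.comp (tendsto_add_atTop_nat 1)
  refine squeeze_zero (fun k => norm_nonneg _) (fun k => ?_) h1
  rw [dcoef, norm_mul]
  exact mul_le_of_le_one_left (norm_nonneg _) (PadicInt.norm_le_one _)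

lemma norm_fval_le {c : ℕ → ℤ_[p]} {r : ℝ} (hr : 0 ≤ r) (h : ∀ k, ‖c k‖ ≤ r) (y : ℤ_[p]) :
    ‖fval c y‖ ≤ r :=
  IsUltrametricDist.norm_tsum_le_of_forall_le_of_nonneg hr
    fun k => (norm_term_le _ _ _).trans (h k)

lemma fval_sub {c d : ℕ → ℤ_[p]} (hc : Tendsto (fun k => ‖c k‖) atTop (nhds 0))
    (hd : Tendsto (fun k => ‖d k‖) atTop (nhds 0)) (y : ℤ_[p]) :
    fval c y - fval d y = fval (fun k => c k - d k) y := by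
  rw [fval, fval, fval, ← Summable.tsum_sub (summable_fval hc y) (summable_fval hd y)]
  exact tsum_congr fun k => by ring

lemma lipschitz {c : ℕ → ℤ_[p]} (hc : Tendsto (fun k => ‖c k‖) atTop (nhds 0)) (y z : ℤ_[p]) :
    ‖fval c y - fval c z‖ ≤ ‖y - z‖ := by
  rw [fval, fval, ← Summable.tsum_sub (summable_fval hc y) (summable_fval hc z)]
  refine IsUltrametricDist.norm_tsum_le_of_forall_le_of_nonneg (norm_nonneg _) fun k => ?_
  obtain ⟨t, ht⟩ := sub_dvd_pow_sub_pow y z k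
  rw [← mul_sub, ht, norm_mul, norm_mul]
  calc ‖c k‖ * (‖y - z‖ * ‖t‖) ≤ 1 * (‖y - z‖ * 1) := by
        gcongr <;> [exact PadicInt.norm_le_one _; exact PadicInt.norm_le_one _]
    _ = ‖y - z‖ := by ring

lemma pow_expand_succ (y h : ℤ_[p]) : ∀ k : ℕ,
    ∃ e : ℤ_[p], (y + h) ^ (k + 1) = y ^ (k + 1) + ((k : ℤ_[p]) + 1) * y ^ k * h + e * h ^ 2 := by
  intro k
  induction k with
  | zero => exact ⟨0, by push_cast; ring⟩
  | succ k ih =>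
    obtain ⟨e, he⟩ := ih
    refine ⟨e * y + ((k : ℤ_[p]) + 1) * y ^ k + e * h, ?_⟩
    have : (y + h) ^ (k + 1 + 1) = (y + h) * (y + h) ^ (k + 1) := by ring
    rw [this, he]
    push_cast
    ring

lemma pow_expand (y h : ℤ_[p]) (k : ℕ) :
    ∃ e : ℤ_[p], (y + h) ^ k = y ^ k + (k : ℤ_[p]) * y ^ (k - 1) * h + e * h ^ 2 := by
  cases k with
  | zero => exact ⟨0, by push_cast; ring⟩
  | succ k =>
    obtain ⟨e, he⟩ := pow_expand_succ y h k
    exact ⟨e, by rw [he]; push_cast; ring_nf⟩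

lemma taylor {c : ℕ → ℤ_[p]} (hc : Tendsto (fun k => ‖c k‖) atTop (nhds 0)) (y h : ℤ_[p]) :
    ∃ E : ℤ_[p], fval c (y + h) = fval c y + fval (dcoef c) y * h + E * h ^ 2 := by
  choose e he using fun k => pow_expand y h k
  set s1 : ℕ → ℤ_[p] := fun k => c k * y ^ k with hs1
  set s2 : ℕ → ℤ_[p] := fun k => (k : ℤ_[p]) * c k * y ^ (k - 1) with hs2
  set s3 : ℕ → ℤ_[p] := fun k => c k * e k with hs3
  have hb2 : ∀ k, ‖s2 k‖ ≤ ‖c k‖ := by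
    intro k
    calc ‖s2 k‖ ≤ ‖(k : ℤ_[p]) * c k‖ * ‖y ^ (k-1)‖ := (norm_mul _ _).le
      _ ≤ (‖(k : ℤ_[p])‖ * ‖c k‖) * 1 := by
          rw [norm_mul]
          gcongr; exact PadicInt.norm_le_one _
      _ ≤ (1 * ‖c k‖) * 1 := by gcongr; exact PadicInt.norm_le_one _
      _ = ‖c k‖ := by ring
  have hb3 : ∀ k, ‖s3 k‖ ≤ ‖c k‖ := by
    intro k
    rw [hs3, norm_mul]
    exact mul_le_of_le_one_right (norm_nonneg _) (PadicInt.norm_le_one _)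
  have hsum1 : Summable s1 := summable_aux hc fun k => by
    rw [hs1, norm_mul]
    exact mul_le_of_le_one_right (norm_nonneg _) (PadicInt.norm_le_one _)
  have hsum2 : Summable s2 := summable_aux hc hb2
  have hsum3 : Summable s3 := summable_aux hc hb3
  refine ⟨∑' k, s3 k, ?_⟩
  have key : ∀ k, c k * (y + h) ^ k = s1 k + s2 k * h + s3 k * h ^ 2 := by
    intro k; rw [he k]; simp only [hs1, hs2, hs3]; ring
  have h2 : fval (dcoef c) y = ∑' k, s2 k := by
    rw [Summable.tsum_eq_zero_add hsum2]
    have : s2 0 = 0 := by simp [hs2]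
    rw [this, zero_add, fval]
    refine tsum_congr fun k => ?_
    simp only [hs2, dcoef, Nat.add_sub_cancel]
    push_cast
    ring
  calc fval c (y + h) = ∑' k, (s1 k + s2 k * h + s3 k * h ^ 2) := tsum_congr key
    _ = (∑' k, (s1 k + s2 k * h)) + (∑' k, s3 k * h ^ 2) :=
        Summable.tsum_add ((hsum1.add (hsum2.mul_right h))) (hsum3.mul_right _)
    _ = (∑' k, s1 k) + (∑' k, s2 k * h) + (∑' k, s3 k * h ^ 2) := by
        rw [Summable.tsum_add hsum1 (hsum2.mul_right h)]
    _ = fval c y + fval (dcoef c) y * h + (∑' k, s3 k) * h ^ 2 := by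
        rw [h2, fval, ← hs1, (hsum2.tsum_mul_right h), (hsum3.tsum_mul_right (h^2))]

/-- The key comparison lemma. -/
lemma key {c : ℕ → ℤ_[p]} (hc : Tendsto (fun k => ‖c k‖) atTop (nhds 0)) {x α β : ℤ_[p]}
    (hα : ‖α - x‖ < ‖fval (dcoef c) x‖) (hβ : ‖β - x‖ < ‖fval (dcoef c) x‖) :
    ‖fval (dcoef c) x‖ * ‖α - β‖ ≤ ‖fval c α - fval c β‖ := by
  rcases eq_or_ne α β with rfl | hne
  · simp
  have hdc := dcoef_tend hc
  have hDβ : ‖fval (dcoef c) β‖ = ‖fval (dcoef c) x‖ := by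
    have h1 : ‖fval (dcoef c) β - fval (dcoef c) x‖ < ‖fval (dcoef c) x‖ :=
      lt_of_le_of_lt (lipschitz hdc β x) hβ
    calc ‖fval (dcoef c) β‖
        = ‖fval (dcoef c) x + (fval (dcoef c) β - fval (dcoef c) x)‖ := by ring_nf
      _ = ‖fval (dcoef c) x‖ := norm_add_of_lt h1
  obtain ⟨E, hE⟩ := taylor hc β (α - β)
  rw [show β + (α - β) = α by ring] at hE
  have hab : ‖α - β‖ < ‖fval (dcoef c) x‖ := by
    rw [show α - β = (α - x) - (β - x) by ring]
    exact lt_of_le_of_lt (norm_sub_le_max _ _) (max_lt hα hβ)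
  have hpos : 0 < ‖α - β‖ := norm_pos_iff.mpr (sub_ne_zero.mpr hne)
  have hEsmall : ‖E * (α - β) ^ 2‖ < ‖fval (dcoef c) β * (α - β)‖ := by
    rw [norm_mul, norm_mul, hDβ, norm_pow]
    have hE1 : ‖E‖ ≤ 1 := PadicInt.norm_le_one _
    nlinarith [norm_nonneg E]
  have heq : fval c α - fval c β = fval (dcoef c) β * (α - β) + E * (α - β) ^ 2 := by
    rw [hE]; ring
  rw [heq, norm_add_of_lt hEsmall, norm_mul, hDβ]

noncomputable def poly (c : ℕ → ℤ_[p]) (n : ℕ) : Polynomial ℤ_[p] :=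
  ∑ k ∈ Finset.range n, Polynomial.C (c k) * Polynomial.X ^ k

lemma poly_eval (c : ℕ → ℤ_[p]) (n : ℕ) (y : ℤ_[p]) :
    (poly c n).eval y = ∑ k ∈ Finset.range n, c k * y ^ k := by
  simp [poly, Polynomial.eval_finset_sum]

lemma poly_deriv_eval (c : ℕ → ℤ_[p]) (n : ℕ) (y : ℤ_[p]) :
    (poly c (n + 1)).derivative.eval y = ∑ j ∈ Finset.range n, dcoef c j * y ^ j := by
  rw [poly, Polynomial.derivative_sum]
  simp only [Polynomial.derivative_C_mul_X_pow]
  rw [Polynomial.eval_finset_sum]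
  simp only [Polynomial.eval_mul, Polynomial.eval_C, Polynomial.eval_pow, Polynomial.eval_X]
  rw [Finset.sum_range_succ']
  simp only [Nat.cast_zero, mul_zero, zero_mul, add_zero]
  refine Finset.sum_congr rfl fun j _ => ?_
  simp only [dcoef, Nat.add_sub_cancel]
  push_cast
  ring

lemma tail_bound {c : ℕ → ℤ_[p]} (hc : Tendsto (fun k => ‖c k‖) atTop (nhds 0)) {n : ℕ} {ε : ℝ}
    (hε : 0 ≤ ε) (h : ∀ k, n ≤ k → ‖c k‖ ≤ ε) (y : ℤ_[p]) :
    ‖fval c y - ∑ k ∈ Finset.range n, c k * y ^ k‖ ≤ ε := by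
  have hs := summable_fval hc y
  rw [fval, ← Summable.sum_add_tsum_nat_add n hs, add_sub_cancel_left]
  refine IsUltrametricDist.norm_tsum_le_of_forall_le_of_nonneg hε fun k => ?_
  exact (norm_term_le _ _ _).trans (h _ (Nat.le_add_left n k))

/-- Hensel's lemma for power series over `ℤ_[p]`. -/
lemma hensel {c : ℕ → ℤ_[p]} (hc : Tendsto (fun k => ‖c k‖) atTop (nhds 0)) (x : ℤ_[p])
    (hx : ‖fval c x‖ < ‖fval (dcoef c) x‖ ^ 2) :
    ∃ α : ℤ_[p], fval c α = 0 ∧ ‖α - x‖ < ‖fval (dcoef c) x‖ := by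
  set D : ℝ := ‖fval (dcoef c) x‖ with hD
  have hD2pos : 0 < D ^ 2 := lt_of_le_of_lt (norm_nonneg _) hx
  have hDpos : 0 < D := by nlinarith [norm_nonneg (fval (dcoef c) x)]
  have hDle1 : D ≤ 1 := PadicInt.norm_le_one _
  -- the sequence of cutoffs
  set εn : ℕ → ℝ := fun n => min ((p : ℝ) ^ (-(n : ℤ))) (D ^ 2 / 2) with hεn
  have hp1 : (1 : ℝ) < (p : ℝ) := by
    exact_mod_cast (Fact.out : p.Prime).one_lt
  have hεpos : ∀ n, 0 < εn n := fun n =>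
    lt_min (zpow_pos (by linarith) _) (by linarith)
  have hεlt : ∀ n, εn n < D ^ 2 := fun n =>
    lt_of_le_of_lt (min_le_right _ _) (by linarith)
  have hεltD : ∀ n, εn n < D := fun n => lt_of_lt_of_le (hεlt n) (by nlinarith)
  have hεanti : ∀ m n, m ≤ n → εn n ≤ εn m := by
    intro m n hmn
    exact min_le_min (zpow_le_zpow_right₀ hp1.le (by omega)) le_rfl
  have hεtend : Tendsto εn atTop (nhds 0) := by
    have h0 : Tendsto (fun n : ℕ => ((p : ℝ)⁻¹) ^ n) atTop (nhds 0) :=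
      tendsto_pow_atTop_nhds_zero_of_lt_one (by positivity)
        (by rw [inv_lt_one_iff₀]; right; linarith)
    have heqf : (fun n : ℕ => (p : ℝ) ^ (-(n : ℤ))) = fun n : ℕ => ((p : ℝ)⁻¹) ^ n := by
      funext n
      rw [zpow_neg, zpow_natCast, inv_pow]
    have h1 : Tendsto (fun n : ℕ => (p : ℝ) ^ (-(n : ℤ))) atTop (nhds 0) := heqf ▸ h0
    exact squeeze_zero (fun n => (hεpos n).le) (fun n => min_le_left _ _) h1
  -- for each n find a cutoff point
  have hM : ∀ n : ℕ, ∃ M : ℕ, ∀ k, M ≤ k → ‖c k‖ ≤ εn n := by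
    intro n
    have := hc.eventually_lt_const (hεpos n)
    rw [eventually_atTop] at this
    obtain ⟨M, hM⟩ := this
    exact ⟨M, fun k hk => (hM k hk).le⟩
  choose M hMle using hM
  -- approximate roots
  have hz : ∀ n : ℕ, ∃ z : ℤ_[p], ‖z - x‖ < D ∧ ‖fval c z‖ ≤ εn n := by
    intro n
    set P : Polynomial ℤ_[p] := poly c (M n + 1) with hP
    have htail : ∀ y, ‖fval c y - P.eval y‖ ≤ εn n := by
      intro y
      rw [hP, poly_eval]
      exact tail_bound hc (hεpos n).le (fun k hk => hMle n k (by omega)) y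
    have hdtail : ‖fval (dcoef c) x - P.derivative.eval x‖ ≤ εn n := by
      rw [hP, poly_deriv_eval]
      refine tail_bound (dcoef_tend hc) (hεpos n).le (fun k hk => ?_) x
      calc ‖dcoef c k‖ ≤ ‖c (k + 1)‖ := by
            rw [dcoef, norm_mul]
            exact mul_le_of_le_one_left (norm_nonneg _) (PadicInt.norm_le_one _)
        _ ≤ εn n := hMle n (k + 1) (by omega)
    have hPderiv : ‖P.derivative.eval x‖ = D := by
      have hsmall : ‖P.derivative.eval x - fval (dcoef c) x‖ < ‖fval (dcoef c) x‖ := by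
        rw [norm_sub_rev]
        exact lt_of_le_of_lt hdtail (hεltD n)
      have h := norm_add_of_lt hsmall
      rwa [show fval (dcoef c) x + (P.derivative.eval x - fval (dcoef c) x)
        = P.derivative.eval x from by ring] at h
    have hPx : ‖P.eval x‖ < ‖P.derivative.eval x‖ ^ 2 := by
      rw [hPderiv]
      have h1 : ‖P.eval x‖ ≤ max ‖fval c x‖ ‖P.eval x - fval c x‖ := by
        have h := IsUltrametricDist.norm_add_le_max (fval c x) (P.eval x - fval c x)
        rwa [show fval c x + (P.eval x - fval c x) = P.eval x from by ring] at h
      refine lt_of_le_of_lt h1 (max_lt hx ?_)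
      rw [norm_sub_rev]
      exact lt_of_le_of_lt (htail x) (hεlt n)
    obtain ⟨z, hz0, hz1, -, -⟩ := hensels_lemma hPx
    simp only [Polynomial.coe_aeval_eq_eval] at hz0 hz1
    refine ⟨z, by rwa [hPderiv] at hz1, ?_⟩
    have := htail z
    rwa [hz0, sub_zero] at this
  choose z hzball hzval using hz
  -- Cauchy
  have hcauchy : CauchySeq z := by
    refine cauchySeq_of_le_tendsto_0 (fun N => εn N / D) (fun n m N hn hm => ?_)
      (by simpa using hεtend.div_const D)
    have hk := key hc (x := x) (α := z n) (β := z m) (hzball n) (hzball m)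
    have h1 : ‖fval c (z n) - fval c (z m)‖ ≤ εn N := by
      refine le_trans (norm_sub_le_max _ _) (max_le ?_ ?_)
      · exact le_trans (hzval n) (hεanti N n hn)
      · exact le_trans (hzval m) (hεanti N m hm)
    rw [dist_eq_norm]
    rw [le_div_iff₀ hDpos, mul_comm]
    exact le_trans hk h1
  obtain ⟨α, hα⟩ := cauchySeq_tendsto_of_complete hcauchy
  have hdist : Tendsto (fun n => ‖α - z n‖) atTop (nhds 0) := by
    have := hα.sub_const α
    rw [sub_self] at this
    have h2 : Tendsto (fun n => ‖z n - α‖) atTop (nhds 0) :=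
      tendsto_zero_iff_norm_tendsto_zero.mp this
    simpa [norm_sub_rev] using h2
  refine ⟨α, ?_, ?_⟩
  · have hb : ∀ n, ‖fval c α‖ ≤ ‖α - z n‖ + εn n := by
      intro n
      calc ‖fval c α‖ ≤ ‖fval c α - fval c (z n)‖ + ‖fval c (z n)‖ := by
            simpa using norm_add_le (fval c α - fval c (z n)) (fval c (z n))
        _ ≤ ‖α - z n‖ + εn n := add_le_add (lipschitz hc α (z n)) (hzval n)
    have hlim : Tendsto (fun n => ‖α - z n‖ + εn n) atTop (nhds 0) := by
      simpa using hdist.add hεtend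
    have := ge_of_tendsto hlim (Eventually.of_forall hb)
    rw [← norm_eq_zero (a := fval c α)]
    exact le_antisymm this (norm_nonneg _)
  · have := hdist.eventually_lt_const hDpos
    rw [eventually_atTop] at this
    obtain ⟨n, hn⟩ := this
    have h1 : ‖α - x‖ ≤ max ‖α - z n‖ ‖z n - x‖ := by
      have : α - x = (α - z n) + (z n - x) := by ring
      rw [this]
      exact IsUltrametricDist.norm_add_le_max _ _
    exact lt_of_le_of_lt h1 (max_lt (hn n le_rfl) (hzball n))

end Stmt7Aux

/-- two power series `f ≡ f̃ mod p^N` converging on `ℤ_p`, with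
`d̃ = v_p(f̃'(a))` satisfying `2d̃ < N` and `2d̃ < v_p(f̃(a))`, each have a unique root in
`a + p^(d̃+1)ℤ_p`, and these roots satisfy `v_p(α - α̃) ≥ N - d̃`. -/
theorem stmt7 (p : ℕ) [Fact p.Prime] (N : ℕ) (a b : ℕ → ℤ_[p])
    (hconva : Filter.Tendsto (fun k => ‖a k‖) Filter.atTop (nhds 0))
    (hconvb : Filter.Tendsto (fun k => ‖b k‖) Filter.atTop (nhds 0))
    (hcong : ∀ k, ‖a k - b k‖ ≤ (p : ℝ) ^ (-(N : ℤ)))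
    (F G G' : ℤ_[p] → ℤ_[p])
    (hF : ∀ y, F y = ∑' k : ℕ, a k * y ^ k)
    (hG : ∀ y, G y = ∑' k : ℕ, b k * y ^ k)
    (hG' : ∀ y, G' y = ∑' k : ℕ, ((k : ℤ_[p]) + 1) * b (k + 1) * y ^ k)
    (x : ℤ_[p])
    (hdN : (p : ℝ) ^ (-(N : ℤ)) < ‖G' x‖ ^ 2)
    (hda : ‖G x‖ < ‖G' x‖ ^ 2) :
    (∃! α : ℤ_[p], F α = 0 ∧ ‖α - x‖ < ‖G' x‖) ∧
    (∃! β : ℤ_[p], G β = 0 ∧ ‖β - x‖ < ‖G' x‖) ∧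
    ∀ α β : ℤ_[p], F α = 0 → ‖α - x‖ < ‖G' x‖ → G β = 0 → ‖β - x‖ < ‖G' x‖ →
      ‖α - β‖ ≤ (p : ℝ) ^ (-(N : ℤ)) / ‖G' x‖ := by
  classical
  open Stmt7Aux in
  -- identifications
  have hFval : ∀ y, F y = fval a y := fun y => by rw [hF y]; rfl
  have hGval : ∀ y, G y = fval b y := fun y => by rw [hG y]; rfl
  have hG'val : ∀ y, G' y = fval (dcoef b) y := fun y => by
    rw [hG' y, fval]
    exact tsum_congr fun k => by rw [dcoef]
  have hpN : (0:ℝ) < (p : ℝ) ^ (-(N : ℤ)) := by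
    have : (0:ℝ) < (p:ℝ) := by exact_mod_cast (Fact.out : p.Prime).pos
    positivity
  have hDpos : 0 < ‖G' x‖ := by nlinarith [norm_nonneg (G' x), hdN]
  have hDle1 : ‖G' x‖ ≤ 1 := PadicInt.norm_le_one _
  have hpNltD : (p:ℝ) ^ (-(N:ℤ)) < ‖G' x‖ := lt_of_lt_of_le hdN (by nlinarith)
  -- difference of coefficients tends to zero
  have hconvab : Filter.Tendsto (fun k => ‖a k - b k‖) Filter.atTop (nhds 0) := by
    refine squeeze_zero (fun k => norm_nonneg _) (fun k => norm_sub_le_max _ _) ?_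
    have := hconva.max hconvb
    simpa using this
  -- ‖F y - G y‖ ≤ p ^ (-N) for every y
  have hFG : ∀ y, ‖F y - G y‖ ≤ (p:ℝ) ^ (-(N:ℤ)) := by
    intro y
    rw [hFval y, hGval y, fval_sub hconva hconvb y]
    exact norm_fval_le hpN.le hcong y
  -- derivative of F : coefficients
  have hdab : ∀ k, ‖dcoef a k - dcoef b k‖ ≤ (p:ℝ) ^ (-(N:ℤ)) := by
    intro k
    have : dcoef a k - dcoef b k = ((k : ℤ_[p]) + 1) * (a (k+1) - b (k+1)) := by
      rw [dcoef, dcoef]; ring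
    rw [this, norm_mul]
    exact le_trans (mul_le_of_le_one_left (norm_nonneg _) (PadicInt.norm_le_one _))
      (hcong (k+1))
  have hF'eq : ‖fval (dcoef a) x‖ = ‖G' x‖ := by
    have hdiff : ‖fval (dcoef a) x - fval (dcoef b) x‖ ≤ (p:ℝ) ^ (-(N:ℤ)) := by
      rw [fval_sub (dcoef_tend hconva) (dcoef_tend hconvb) x]
      exact norm_fval_le hpN.le hdab x
    have hsmall : ‖fval (dcoef a) x - fval (dcoef b) x‖ < ‖fval (dcoef b) x‖ := by
      have he : ‖fval (dcoef b) x‖ = ‖G' x‖ := by rw [hG'val x]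
      rw [he]
      exact lt_of_le_of_lt hdiff hpNltD
    have h := norm_add_of_lt hsmall
    rw [show fval (dcoef b) x + (fval (dcoef a) x - fval (dcoef b) x)
      = fval (dcoef a) x from by ring] at h
    rw [h, ← hG'val x]
  -- Hensel for F
  have hFx : ‖fval a x‖ < ‖fval (dcoef a) x‖ ^ 2 := by
    rw [hF'eq, ← hFval x]
    have h1 : ‖F x‖ ≤ max ‖G x‖ ‖F x - G x‖ := by
      have h := IsUltrametricDist.norm_add_le_max (G x) (F x - G x)
      rwa [show G x + (F x - G x) = F x from by ring] at h
    exact lt_of_le_of_lt h1 (max_lt hda (lt_of_le_of_lt (hFG x) hdN))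
  obtain ⟨α₀, hα₀root, hα₀ball⟩ := hensel hconva x hFx
  have hGx : ‖fval b x‖ < ‖fval (dcoef b) x‖ ^ 2 := by
    rw [← hG'val x, ← hGval x]; exact hda
  obtain ⟨β₀, hβ₀root, hβ₀ball⟩ := hensel hconvb x hGx
  rw [hF'eq] at hα₀ball
  rw [← hG'val x] at hβ₀ball
  refine ⟨⟨α₀, ⟨by rw [hFval]; exact hα₀root, hα₀ball⟩, ?_⟩,
    ⟨β₀, ⟨by rw [hGval]; exact hβ₀root, hβ₀ball⟩, ?_⟩, ?_⟩
  · rintro y ⟨hy0, hyb⟩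
    have hk := key hconva (x := x) (α := y) (β := α₀)
      (by rwa [hF'eq]) (by rwa [hF'eq])
    rw [← hFval y, hy0, hα₀root, sub_zero, norm_zero, hF'eq] at hk
    have : ‖y - α₀‖ ≤ 0 := by
      by_contra hcon
      push_neg at hcon
      nlinarith
    have := le_antisymm this (norm_nonneg _)
    rw [norm_eq_zero] at this
    exact sub_eq_zero.mp this
  · rintro y ⟨hy0, hyb⟩
    have hk := key hconvb (x := x) (α := y) (β := β₀)
      (by rwa [hG'val x] at hyb) (by rwa [hG'val x] at hβ₀ball)
    rw [← hGval y, hy0, hβ₀root, sub_zero, norm_zero, ← hG'val x] at hk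
    have : ‖y - β₀‖ ≤ 0 := by
      by_contra hcon
      push_neg at hcon
      nlinarith
    have := le_antisymm this (norm_nonneg _)
    rw [norm_eq_zero] at this
    exact sub_eq_zero.mp this
  · intro α β hαr hαb hβr hβb
    have hk := key hconvb (x := x) (α := α) (β := β)
      (by rwa [hG'val x] at hαb) (by rwa [hG'val x] at hβb)
    rw [← hG'val x] at hk
    have hGα : ‖fval b α - fval b β‖ ≤ (p:ℝ) ^ (-(N:ℤ)) := by
      rw [← hGval α, ← hGval β, hβr, sub_zero]
      have h := hFG α
      rwa [hαr, zero_sub, norm_neg] at h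
    rw [le_div_iff₀ hDpos]
    calc ‖α - β‖ * ‖G' x‖ = ‖G' x‖ * ‖α - β‖ := by ring
      _ ≤ ‖fval b α - fval b β‖ := hk
      _ ≤ (p:ℝ) ^ (-(N:ℤ)) := hGα
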